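/- The Nagata endomorphism of K[x,y,z] defined by x ↦ x − 2(y²+xz)y − (y²+xz)²z, y ↦ y + (y²+xz)z, z ↦ z is a K-algebra automorphism of K[x,y,z]. -/
import Mathlib


open MvPolynomial

noncomputable def nagataF (K : Type*) [Field K] :
    MvPolynomial (Fin 3) K →ₐ[K] MvPolynomial (Fin 3) K :=
  aeval ![X 0 - 2 * ((X 1) ^ 2 + X 0 * X 2) * X 1 - ((X 1) ^ 2 + X 0 * X 2) ^ 2 * X 2,
          X 1 + ((X 1) ^ 2 + X 0 * X 2) * X 2, X 2]

noncomputable def nagataG (K : Type*) [Field K] :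
    MvPolynomial (Fin 3) K →ₐ[K] MvPolynomial (Fin 3) K :=
  aeval ![X 0 + 2 * ((X 1) ^ 2 + X 0 * X 2) * X 1 - ((X 1) ^ 2 + X 0 * X 2) ^ 2 * X 2,
          X 1 - ((X 1) ^ 2 + X 0 * X 2) * X 2, X 2]

/-- The Nagata endomorphism of `K[x,y,z]`, `x ↦ x − 2(y²+xz)y − (y²+xz)²z`,
`y ↦ y + (y²+xz)z`, `z ↦ z`, is a `K`-algebra automorphism. -/
theorem nagata_is_automorphism (K : Type*) [Field K] :
    ∃ e : MvPolynomial (Fin 3) K ≃ₐ[K] MvPolynomial (Fin 3) K,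
      e (X 0) = X 0 - 2 * ((X 1) ^ 2 + X 0 * X 2) * X 1 - ((X 1) ^ 2 + X 0 * X 2) ^ 2 * X 2 ∧
      e (X 1) = X 1 + ((X 1) ^ 2 + X 0 * X 2) * X 2 ∧
      e (X 2) = X 2 := by
  refine ⟨AlgEquiv.ofAlgHom (nagataF K) (nagataG K) ?_ ?_, ?_, ?_, ?_⟩
  · apply MvPolynomial.algHom_ext
    intro i
    fin_cases i <;>
      simp [nagataF, nagataG, Fin.isValue, map_add, map_sub, map_mul, map_pow, map_ofNat] <;>
      ring
  · apply MvPolynomial.algHom_ext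
    intro i
    fin_cases i <;>
      simp [nagataF, nagataG, Fin.isValue, map_add, map_sub, map_mul, map_pow, map_ofNat] <;>
      ring
  · simp [nagataF]
  · simp [nagataF]
  · simp [nagataF]
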